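/- Under the hypotheses: {e_p}_{p<2^n} is a basis of an algebra with e_p * e_q = s(p,q) e_{p⊕q} (⊕ = bitwise XOR), and T is an invertible change-of-coordinates matrix to a diagonal basis satisfying s(p,q) T_{α, p⊕q} = T_{α,p} T_{α,q} for all α,p,q — then every entry of T is nonzero. -/

import Mathlib

/-- Bitwise XOR on `Fin (2^n)`. -/
def finXor {n : ℕ} (p q : Fin (2 ^ n)) : Fin (2 ^ n) :=
  ⟨p.val ^^^ q.val, Nat.xor_lt_two_pow p.isLt q.isLt⟩

lemma finXor_self {n : ℕ} (p : Fin (2 ^ n)) : finXor p p = ⟨0, Nat.pow_pos (by norm_num)⟩ := by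
  simp [finXor]

/-- If an invertible change-of-coordinates matrix `T` to a diagonal basis satisfies
`s p q * T α (p ⊕ q) = T α p * T α q`, then every entry of `T` is nonzero. -/
theorem entries_nonzero {K : Type*} [Field K] {n : ℕ}
    (s : Fin (2 ^ n) → Fin (2 ^ n) → K)
    (T : Matrix (Fin (2 ^ n)) (Fin (2 ^ n)) K) (hT : IsUnit T)
    (hrel : ∀ α p q, s p q * T α (finXor p q) = T α p * T α q) :
    ∀ α p, T α p ≠ 0 := by
  have hdet : T.det ≠ 0 := by
    have := (Matrix.isUnit_iff_isUnit_det T).mp hT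
    exact this.ne_zero
  set z : Fin (2 ^ n) := ⟨0, Nat.pow_pos (by norm_num)⟩ with hz
  -- T α 0 ≠ 0 for all α
  have h0 : ∀ α, T α z ≠ 0 := by
    intro α h
    apply hdet
    apply Matrix.det_eq_zero_of_row_eq_zero α
    intro p
    have := hrel α p p
    rw [finXor_self, ← hz, h, mul_zero] at this
    exact pow_eq_zero_iff (n := 2) (by norm_num) |>.mp (by rw [sq]; exact this.symm)
  -- s p p ≠ 0 for all p
  have hs : ∀ p : Fin (2 ^ n), s p p ≠ 0 := by
    intro p h
    apply hdet
    apply Matrix.det_eq_zero_of_column_eq_zero p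
    intro α
    have := hrel α p p
    rw [h, zero_mul] at this
    exact pow_eq_zero_iff (n := 2) (by norm_num) |>.mp (by rw [sq]; exact this.symm)
  intro α p hp
  have := hrel α p p
  rw [finXor_self, ← hz, hp, zero_mul] at this
  exact (mul_ne_zero (hs p) (h0 α)) this
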